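/- Let 𝒦 = {K₁, …, K_M} be a finite set of row-stochastic N×N real matrices, each with strictly positive diagonal entries, and let p₁, …, p_M be strictly positive reals summing to 1. Then Σᵢ pᵢKᵢ is primitive if and only if there exist an integer L with 1 ≤ L < 2N² and indices k₁, …, k_L ∈ {1,…,M} such that all entries of the product K_{k₁}K_{k₂}⋯K_{k_L} are strictly positive. -/

import Mathlib

open Matrix Kronecker Finset

/-- A square real matrix is row-stochastic if it has nonnegative entries and
each of its rows sums to 1. -/
def RowStochastic {N : ℕ} (K : Matrix (Fin N) (Fin N) ℝ) : Prop :=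
  (∀ i j, 0 ≤ K i j) ∧ ∀ i, ∑ j, K i j = 1

/-- A nonnegative square matrix `T` is primitive if `T ^ m` has all entries
strictly positive for some integer `m ≥ 1`. -/
def IsPrimitive {n : Type*} [Fintype n] [DecidableEq n] (T : Matrix n n ℝ) : Prop :=
  ∃ m : ℕ, 1 ≤ m ∧ ∀ i j, 0 < (T ^ m) i j

lemma entry_mul_nonneg {N : ℕ} {A B : Matrix (Fin N) (Fin N) ℝ}
    (hA : ∀ i j, 0 ≤ A i j) (hB : ∀ i j, 0 ≤ B i j) : ∀ i j, 0 ≤ (A * B) i j := by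
  intro i j
  rw [Matrix.mul_apply]
  exact Finset.sum_nonneg fun a _ => mul_nonneg (hA i a) (hB a j)

lemma entry_mul_pos {N : ℕ} {A B : Matrix (Fin N) (Fin N) ℝ}
    (hA : ∀ i j, 0 ≤ A i j) (hB : ∀ i j, 0 ≤ B i j) {i a j : Fin N}
    (h1 : 0 < A i a) (h2 : 0 < B a j) : 0 < (A * B) i j := by
  rw [Matrix.mul_apply]
  exact Finset.sum_pos' (fun b _ => mul_nonneg (hA i b) (hB b j))
    ⟨a, Finset.mem_univ a, mul_pos h1 h2⟩

lemma exists_of_entry_mul_pos {N : ℕ} {A B : Matrix (Fin N) (Fin N) ℝ}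
    (hA : ∀ i j, 0 ≤ A i j) (hB : ∀ i j, 0 ≤ B i j) {i j : Fin N}
    (h : 0 < (A * B) i j) : ∃ a, 0 < A i a ∧ 0 < B a j := by
  rw [Matrix.mul_apply] at h
  obtain ⟨a, -, ha⟩ := Finset.exists_lt_of_sum_lt
    (show ∑ _a : Fin N, (0:ℝ) < ∑ a, A i a * B a j by simpa using h)
  refine ⟨a, ?_, ?_⟩
  · rcases (hA i a).lt_or_eq with h'|h'
    · exact h'
    · exfalso; rw [← h'] at ha; simp at ha
  · rcases (hB a j).lt_or_eq with h'|h'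
    · exact h'
    · exfalso; rw [← h'] at ha; simp at ha

lemma word_nonneg {N M : ℕ} (K : Fin M → Matrix (Fin N) (Fin N) ℝ)
    (hKnn : ∀ k i j, 0 ≤ K k i j) :
    ∀ w : List (Fin M), ∀ i j, 0 ≤ ((w.map K).prod) i j := by
  intro w
  induction w with
  | nil =>
    intro i j
    by_cases h : i = j
    · simp [h, Matrix.one_apply_eq]
    · simp [Matrix.one_apply_ne h]
  | cons k w ih =>
    simp only [List.map_cons, List.prod_cons]
    exact entry_mul_nonneg (hKnn k) ih

lemma word_diag_pos {N M : ℕ} (K : Fin M → Matrix (Fin N) (Fin N) ℝ)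
    (hKnn : ∀ k i j, 0 ≤ K k i j) (hdiag : ∀ k i, 0 < K k i i) :
    ∀ w : List (Fin M), ∀ i, 0 < ((w.map K).prod) i i := by
  intro w
  induction w with
  | nil => intro i; simp [Matrix.one_apply_eq]
  | cons k w ih =>
    intro i
    simp only [List.map_cons, List.prod_cons]
    exact entry_mul_pos (hKnn k) (word_nonneg K hKnn w) (hdiag k i) (ih i)

lemma pow_entry_nonneg {N : ℕ} {T : Matrix (Fin N) (Fin N) ℝ}
    (hT : ∀ i j, 0 ≤ T i j) : ∀ m i j, 0 ≤ (T ^ m) i j := by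
  intro m
  induction m with
  | zero =>
    intro i j
    by_cases h : i = j
    · simp [h, Matrix.one_apply_eq]
    · simp [Matrix.one_apply_ne h]
  | succ m ih =>
    rw [pow_succ]
    exact entry_mul_nonneg ih hT

lemma pow_to_word {N M : ℕ} (K : Fin M → Matrix (Fin N) (Fin N) ℝ)
    (T : Matrix (Fin N) (Fin N) ℝ)
    (hKnn : ∀ k i j, 0 ≤ K k i j) (hTnn : ∀ i j, 0 ≤ T i j)
    (hpat : ∀ i j, 0 < T i j ↔ ∃ k, 0 < K k i j) :
    ∀ m i j, 0 < (T ^ m) i j →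
      ∃ w : List (Fin M), w.length = m ∧ 0 < ((w.map K).prod) i j := by
  intro m
  induction m with
  | zero => intro i j h; exact ⟨[], rfl, by simpa using h⟩
  | succ m ih =>
    intro i j h
    rw [pow_succ'] at h
    obtain ⟨a, h1, h2⟩ := exists_of_entry_mul_pos hTnn (pow_entry_nonneg hTnn m) h
    obtain ⟨k, hk⟩ := (hpat i a).1 h1
    obtain ⟨w, hw, hwp⟩ := ih a j h2
    refine ⟨k :: w, by simp [hw], ?_⟩
    rw [List.map_cons, List.prod_cons]
    exact entry_mul_pos (hKnn k) (word_nonneg K hKnn w) hk hwp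

lemma word_to_pow {N M : ℕ} (K : Fin M → Matrix (Fin N) (Fin N) ℝ)
    (T : Matrix (Fin N) (Fin N) ℝ)
    (hKnn : ∀ k i j, 0 ≤ K k i j) (hTnn : ∀ i j, 0 ≤ T i j)
    (hpat : ∀ i j, 0 < T i j ↔ ∃ k, 0 < K k i j) :
    ∀ (w : List (Fin M)) (i j : Fin N), 0 < ((w.map K).prod) i j →
      0 < (T ^ w.length) i j := by
  intro w
  induction w with
  | nil => intro i j h; simpa using h
  | cons k w ih =>
    intro i j h
    rw [List.map_cons, List.prod_cons] at h
    obtain ⟨a, h1, h2⟩ := exists_of_entry_mul_pos (hKnn k) (word_nonneg K hKnn w) h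
    rw [List.length_cons, pow_succ']
    exact entry_mul_pos hTnn (pow_entry_nonneg hTnn w.length)
      ((hpat i a).2 ⟨k, h1⟩) (ih a j h2)

lemma bind_col {N M : ℕ} (K : Fin M → Matrix (Fin N) (Fin N) ℝ)
    (hKnn : ∀ k i j, 0 ≤ K k i j) (hdiag : ∀ k i, 0 < K k i i) (c : Fin N) :
    ∀ (l : List (Fin N)) (g : Fin N → List (Fin M)),
      (∀ x ∈ l, 0 < (((g x).map K).prod) x c) →
      ∀ x ∈ l, 0 < (((l.flatMap g).map K).prod) x c := by
  intro l
  induction l with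
  | nil => intro g _ x hx; simp at hx
  | cons a l ih =>
    intro g h x hx
    rw [List.flatMap_cons, List.map_append, List.prod_append]
    rcases List.mem_cons.mp hx with rfl | hx'
    · exact entry_mul_pos (word_nonneg K hKnn _) (word_nonneg K hKnn _)
        (h x (List.mem_cons_self)) (word_diag_pos K hKnn hdiag _ c)
    · exact entry_mul_pos (word_nonneg K hKnn _) (word_nonneg K hKnn _)
        (word_diag_pos K hKnn hdiag _ x)
        (ih g (fun y hy => h y (List.mem_cons_of_mem _ hy)) x hx')

lemma bind_row {N M : ℕ} (K : Fin M → Matrix (Fin N) (Fin N) ℝ)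
    (hKnn : ∀ k i j, 0 ≤ K k i j) (hdiag : ∀ k i, 0 < K k i i) (c : Fin N) :
    ∀ (l : List (Fin N)) (g : Fin N → List (Fin M)),
      (∀ x ∈ l, 0 < (((g x).map K).prod) c x) →
      ∀ x ∈ l, 0 < (((l.flatMap g).map K).prod) c x := by
  intro l
  induction l with
  | nil => intro g _ x hx; simp at hx
  | cons a l ih =>
    intro g h x hx
    rw [List.flatMap_cons, List.map_append, List.prod_append]
    rcases List.mem_cons.mp hx with rfl | hx'
    · exact entry_mul_pos (word_nonneg K hKnn _) (word_nonneg K hKnn _)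
        (h x (List.mem_cons_self)) (word_diag_pos K hKnn hdiag _ x)
    · exact entry_mul_pos (word_nonneg K hKnn _) (word_nonneg K hKnn _)
        (word_diag_pos K hKnn hdiag _ c)
        (ih g (fun y hy => h y (List.mem_cons_of_mem _ hy)) x hx')

lemma bind_length {α β : Type*} (c : ℕ) :
    ∀ (l : List α) (g : α → List β), (∀ x ∈ l, (g x).length = c) →
      (l.flatMap g).length = l.length * c := by
  intro l
  induction l with
  | nil => intro g _; simp
  | cons a l ih =>
    intro g h
    rw [List.flatMap_cons, List.length_append, List.length_cons,
      h a (List.mem_cons_self), ih g (fun y hy => h y (List.mem_cons_of_mem _ hy))]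
    ring

theorem stmt1 {N M : ℕ} (hN : 1 ≤ N) (hM : 1 ≤ M)
    (K : Fin M → Matrix (Fin N) (Fin N) ℝ)
    (hK : ∀ k, RowStochastic (K k))
    (hdiag : ∀ k i, 0 < K k i i)
    (p : Fin M → ℝ) (hp : ∀ k, 0 < p k) (hpsum : ∑ k, p k = 1) :
    _root_.IsPrimitive (∑ k, p k • K k) ↔
      ∃ L : ℕ, 1 ≤ L ∧ L < 2 * N ^ 2 ∧
        ∃ f : Fin L → Fin M, ∀ i j, 0 < ((List.ofFn fun s => K (f s)).prod) i j := by
  classical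
  set T := ∑ k, p k • K k with hTdef
  have hKnn : ∀ k i j, 0 ≤ K k i j := fun k => (hK k).1
  have hTentry : ∀ i j, T i j = ∑ k, p k * K k i j := by
    intro i j
    simp [hTdef, Matrix.sum_apply, Matrix.smul_apply, smul_eq_mul]
  have hTnn : ∀ i j, 0 ≤ T i j := by
    intro i j
    rw [hTentry]
    exact Finset.sum_nonneg fun k _ => mul_nonneg (hp k).le (hKnn k i j)
  have hpat : ∀ i j, 0 < T i j ↔ ∃ k, 0 < K k i j := by
    intro i j
    rw [hTentry]
    constructor
    · intro h
      obtain ⟨k, -, hk⟩ := Finset.exists_lt_of_sum_lt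
        (show ∑ _k : Fin M, (0:ℝ) < ∑ k, p k * K k i j by simpa using h)
      refine ⟨k, ?_⟩
      rcases (hKnn k i j).lt_or_eq with h'|h'
      · exact h'
      · exfalso; rw [← h'] at hk; simp at hk
    · rintro ⟨k, hk⟩
      exact Finset.sum_pos' (fun b _ => mul_nonneg (hp b).le (hKnn b i j))
        ⟨k, Finset.mem_univ k, mul_pos (hp k) hk⟩
  have hTdiag : ∀ i, 0 < T i i := fun i => (hpat i i).2 ⟨⟨0, hM⟩, hdiag _ i⟩
  constructor
  · rintro ⟨m, hm1, hmpos⟩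
    have key : ∀ i j, 0 < (T ^ (N - 1)) i j := by
      rcases Nat.lt_or_ge N 2 with hN2 | hN2
      · have hN1 : N = 1 := by omega
        subst hN1
        intro i j
        have hij : i = j := Subsingleton.elim i j
        subst hij
        simp [Matrix.one_apply_eq]
      · intro i j
        set s : ℕ → Finset (Fin N) :=
          fun t => Finset.univ.filter (fun j => 0 < (T ^ (t + 1)) i j) with hs
        have hmem : ∀ t j, j ∈ s t ↔ 0 < (T ^ (t + 1)) i j := by
          intro t j; simp [hs]
        have hmono1 : ∀ t, s t ⊆ s (t + 1) := by
          intro t j hj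
          rw [hmem] at hj ⊢
          rw [pow_succ]
          exact entry_mul_pos (pow_entry_nonneg hTnn _) hTnn hj (hTdiag j)
        have hmono : ∀ t d, s t ⊆ s (t + d) := by
          intro t d
          induction d with
          | zero => exact Finset.Subset.refl _
          | succ d ih => exact ih.trans (hmono1 (t + d))
        have stepiff : ∀ (u : ℕ) (i' j' : Fin N),
            0 < (T ^ (u + 1)) i' j' ↔ ∃ a, 0 < (T ^ u) i' a ∧ 0 < T a j' := by
          intro u i' j'
          rw [pow_succ]
          constructor
          · intro h
            exact exists_of_entry_mul_pos (pow_entry_nonneg hTnn u) hTnn h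
          · rintro ⟨a, h1, h2⟩
            exact entry_mul_pos (pow_entry_nonneg hTnn u) hTnn h1 h2
        have hstep : ∀ t, s t = s (t + 1) → s (t + 1) = s (t + 2) := by
          intro t ht
          ext j'
          rw [hmem, hmem]
          rw [stepiff (t + 2) i j', stepiff (t + 1) i j']
          constructor
          · rintro ⟨a, h1, h2⟩
            refine ⟨a, ?_, h2⟩
            have ha : a ∈ s t := by rw [hmem]; exact h1
            rw [ht, hmem, show t + 1 + 1 = t + 2 by omega] at ha
            exact ha
          · rintro ⟨a, h1, h2⟩
            refine ⟨a, ?_, h2⟩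
            have ha : a ∈ s (t + 1) := by
              rw [hmem, show t + 1 + 1 = t + 2 by omega]; exact h1
            rw [← ht, hmem] at ha
            exact ha
        have hconst : ∀ t, s t = s (t + 1) → ∀ d, s (t + d) = s t := by
          intro t ht d
          induction d with
          | zero => rfl
          | succ d ih =>
            have h2 : s (t + d) = s (t + d + 1) := by
              clear ih
              induction d with
              | zero => exact ht
              | succ d ih2 => exact hstep (t + d) ih2
            rw [show t + (d + 1) = t + d + 1 by omega, ← h2]
            exact ih
        have hunivm : s (m - 1) = Finset.univ := by
          apply Finset.eq_univ_iff_forall.2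
          intro j'
          rw [hmem]
          have : m - 1 + 1 = m := by omega
          rw [this]
          exact hmpos i j'
        have hstab : ∀ t, s t = s (t + 1) → s t = Finset.univ := by
          intro t ht
          rcases Nat.le_total t (m - 1) with h | h
          · have := hconst t ht (m - 1 - t)
            rw [show t + (m - 1 - t) = m - 1 by omega] at this
            rw [← this, hunivm]
          · apply Finset.eq_univ_iff_forall.2
            intro j'
            have := hmono (m - 1) (t - (m - 1))
            rw [show m - 1 + (t - (m - 1)) = t by omega, hunivm] at this
            exact this (Finset.mem_univ j')
        have hP : ∀ t, s t = Finset.univ ∨ t + 2 ≤ (s t).card := by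
          intro t
          induction t with
          | zero =>
            by_cases hc : ∃ j', j' ≠ i ∧ 0 < T i j'
            · right
              obtain ⟨j', hji, hj⟩ := hc
              have hsub : {j', i} ⊆ s 0 := by
                intro x hx
                rw [hmem, zero_add, pow_one]
                rcases Finset.mem_insert.mp hx with rfl | hx'
                · exact hj
                · rw [Finset.mem_singleton.mp hx']; exact hTdiag i
              have hcard : ({j', i} : Finset (Fin N)).card = 2 := by
                rw [Finset.card_insert_of_notMem (by simpa using hji)]
                simp
              calc (0:ℕ) + 2 = 2 := by omega
                _ = ({j', i} : Finset (Fin N)).card := hcard.symm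
                _ ≤ (s 0).card := Finset.card_le_card hsub
            · left
              push_neg at hc
              have habs : ∀ j', j' ≠ i → T i j' = 0 := by
                intro j' hji
                exact le_antisymm (hc j' hji) (hTnn i j')
              have claim : ∀ t (j' : Fin N), 0 < (T ^ t) i j' → j' = i := by
                intro t
                induction t with
                | zero =>
                  intro j' h
                  by_contra hji
                  rw [pow_zero, Matrix.one_apply_ne (Ne.symm hji)] at h
                  exact lt_irrefl _ h
                | succ t ih =>
                  intro j' h
                  rw [pow_succ'] at h
                  obtain ⟨a, h1, h2⟩ :=
                    exists_of_entry_mul_pos hTnn (pow_entry_nonneg hTnn t) h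
                  have ha : a = i := by
                    by_contra hai
                    rw [habs a hai] at h1
                    exact lt_irrefl _ h1
                  subst ha
                  exact ih j' h2
              apply Finset.eq_univ_iff_forall.2
              intro j'
              rw [hmem]
              have hji : j' = i := claim m j' (hmpos i j')
              subst hji
              rw [zero_add, pow_one]
              exact hTdiag j' 
          | succ t ih =>
            rcases ih with h | h
            · left
              apply Finset.eq_univ_iff_forall.2
              intro j'
              apply hmono1 t
              rw [h]
              exact Finset.mem_univ j' 
            · by_cases he : s t = s (t + 1)
              · left
                rw [← he]
                exact hstab t he
              · right
                have hss : s t ⊂ s (t + 1) := Finset.ssubset_iff_subset_ne.2 ⟨hmono1 t, he⟩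
                have := Finset.card_lt_card hss
                omega
        have hfin : s (N - 2) = Finset.univ := by
          rcases hP (N - 2) with h | h
          · exact h
          · apply Finset.eq_univ_of_card
            have hle : (s (N - 2)).card ≤ N := by
              simpa using Finset.card_le_univ (s (N - 2))
            simp only [Fintype.card_fin]
            omega
        have hj : j ∈ s (N - 2) := hfin ▸ Finset.mem_univ j
        rw [hmem] at hj
        rw [show N - 2 + 1 = N - 1 by omega] at hj
        exact hj
    set a0 : Fin N := ⟨0, hN⟩
    have hcol := fun i => pow_to_word K T hKnn hTnn hpat (N - 1) i a0 (key i a0)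
    choose wc hwc1 hwc2 using hcol
    have hrow := fun j => pow_to_word K T hKnn hTnn hpat (N - 1) a0 j (key a0 j)
    choose wr hwr1 hwr2 using hrow
    set U : List (Fin M) := (List.finRange N).flatMap wc with hU
    set V : List (Fin M) := (List.finRange N).flatMap wr with hV
    have hUpos : ∀ i, 0 < ((U.map K).prod) i a0 := fun i =>
      bind_col K hKnn hdiag a0 (List.finRange N) wc (fun x _ => hwc2 x) i (List.mem_finRange i)
    have hVpos : ∀ j, 0 < ((V.map K).prod) a0 j := fun j =>
      bind_row K hKnn hdiag a0 (List.finRange N) wr (fun x _ => hwr2 x) j (List.mem_finRange j)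
    set w : List (Fin M) := U ++ (V ++ [⟨0, hM⟩]) with hw
    have hwpos : ∀ i j, 0 < ((w.map K).prod) i j := by
      intro i j
      have h2 : 0 < (((V ++ [(⟨0, hM⟩ : Fin M)]).map K).prod) a0 j := by
        rw [List.map_append, List.prod_append]
        refine entry_mul_pos (word_nonneg K hKnn V) (word_nonneg K hKnn _) (hVpos j) ?_
        simpa using hdiag ⟨0, hM⟩ j
      rw [hw, List.map_append, List.prod_append]
      exact entry_mul_pos (word_nonneg K hKnn U) (word_nonneg K hKnn _) (hUpos i) h2
    have hUlen : U.length = N * (N - 1) := by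
      rw [hU, bind_length (N - 1) (List.finRange N) wc (fun x _ => hwc1 x)]
      simp
    have hVlen : V.length = N * (N - 1) := by
      rw [hV, bind_length (N - 1) (List.finRange N) wr (fun x _ => hwr1 x)]
      simp
    have hwlen : w.length = N * (N - 1) + (N * (N - 1) + 1) := by
      simp [hw, hUlen, hVlen]
    refine ⟨w.length, by rw [hwlen]; omega, ?_, w.get, ?_⟩
    · rw [hwlen]
      obtain ⟨n, rfl⟩ : ∃ n, N = n + 1 := ⟨N - 1, by omega⟩
      simp only [Nat.add_sub_cancel]
      nlinarith
    · intro i j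
      have heq : (List.ofFn fun s => K (w.get s)) = w.map K := by
        rw [show (fun s => K (w.get s)) = K ∘ w.get from rfl, ← List.map_ofFn, List.ofFn_get]
      rw [heq]
      exact hwpos i j
  · rintro ⟨L, hL1, -, f, hf⟩
    refine ⟨L, hL1, ?_⟩
    intro i j
    have h := word_to_pow K T hKnn hTnn hpat (List.ofFn f) i j
      (by rw [List.map_ofFn]; exact hf i j)
    rwa [List.length_ofFn] at h
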